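/- A real irrational number α is singular on average if and only if q_k^{1/k} → ∞, where (q_k) are the denominators of the convergents of α. -/

import Mathlib

open Filter MeasureTheory

/-- Distance from a real number to the nearest integer. -/
noncomputable def nint (x : ℝ) : ℝ := |x - round x|

/-- The denominator `q_k` of the `k`-th continued fraction convergent of `α`. -/
noncomputable def cfDen (α : ℝ) (k : ℕ) : ℝ := (GenContFract.of α).dens k

open scoped Classical

/-- `α` is singular on average: for every `c > 0`, the density of those `ℓ ∈ {1,…,N}`
for which `‖qα‖ ≤ c·2^{-ℓ}` has a solution with `0 < q ≤ 2^ℓ` tends to `1`. -/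
noncomputable def SingularOnAverage (α : ℝ) : Prop :=
  ∀ c : ℝ, 0 < c →
    Tendsto (fun N : ℕ =>
      (((Finset.Icc 1 N).filter (fun ℓ : ℕ =>
        ∃ q : ℕ, 0 < q ∧ q ≤ 2 ^ ℓ ∧ nint (q * α) ≤ c * 2 ^ (-(ℓ : ℤ)))).card : ℝ) / N)
      atTop (nhds 1)

open GenContFract

open scoped Classical
namespace CFAux
variable {α : ℝ}

theorem stream_ne_none (hα : Irrational α) (n : ℕ) : IntFractPair.stream α n ≠ none := by
  intro h
  have hterm : (GenContFract.of α).Terminates := by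
    cases n with
    | zero => simp [IntFractPair.stream_zero] at h
    | succ m => exact ⟨m, of_terminatedAt_n_iff_succ_nth_intFractPair_stream_eq_none.2 h⟩
  rcases (terminates_iff_rat α).1 hterm with ⟨q, hq⟩
  exact hα ⟨q, hq.symm⟩

theorem exists_stream (hα : Irrational α) (n : ℕ) :
    ∃ ifp : IntFractPair ℝ, IntFractPair.stream α n = some ifp ∧ 0 < ifp.fr ∧ ifp.fr < 1 := by
  rcases Option.ne_none_iff_exists'.1 (stream_ne_none hα n) with ⟨ifp, hifp⟩
  refine ⟨ifp, hifp, ?_, IntFractPair.nth_stream_fr_lt_one hifp⟩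
  rcases (IntFractPair.nth_stream_fr_nonneg hifp).lt_or_eq with h | h
  · exact h
  · exact absurd (IntFractPair.stream_eq_none_of_fr_eq_zero hifp h.symm) (stream_ne_none hα (n+1))

theorem not_terminatedAt (hα : Irrational α) (n : ℕ) : ¬(GenContFract.of α).TerminatedAt n := by
  intro h
  exact stream_ne_none hα (n+1) (of_terminatedAt_n_iff_succ_nth_intFractPair_stream_eq_none.1 h)

theorem pack (hα : Irrational α) (n : ℕ) :
    ∃ (ifp : IntFractPair ℝ) (b : ℤ),
      IntFractPair.stream α n = some ifp ∧ 0 < ifp.fr ∧ ifp.fr < 1 ∧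
      1 ≤ b ∧ (b : ℝ) ≤ ifp.fr⁻¹ ∧ ifp.fr⁻¹ < b + 1 ∧
      (GenContFract.of α).s.get? n = some ⟨1, (b : ℝ)⟩ := by
  obtain ⟨ifp, hst, h0, h1⟩ := exists_stream hα n
  have hsucc : IntFractPair.stream α (n+1) = some (IntFractPair.of ifp.fr⁻¹) :=
    IntFractPair.stream_succ_of_some hst h0.ne'
  have hinv : (1:ℝ) < ifp.fr⁻¹ := one_lt_inv_iff₀.2 ⟨h0, h1⟩
  refine ⟨ifp, ⌊ifp.fr⁻¹⌋, hst, h0, h1, Int.le_floor.2 ?_, Int.floor_le _,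
    Int.lt_floor_add_one _, ?_⟩
  · exact_mod_cast hinv.le
  · have := get?_of_eq_some_of_succ_get?_intFractPair_stream hsucc
    simpa [IntFractPair.of] using this

theorem contsAux_rec (hα : Irrational α) (n : ℕ) : ∃ b : ℤ, 1 ≤ b ∧
    ((GenContFract.of α).contsAux (n+2)).a
      = b * ((GenContFract.of α).contsAux (n+1)).a + ((GenContFract.of α).contsAux n).a ∧
    ((GenContFract.of α).contsAux (n+2)).b
      = b * ((GenContFract.of α).contsAux (n+1)).b + ((GenContFract.of α).contsAux n).b := by
  obtain ⟨ifp, b, hst, h0, h1, hb1, hble, hblt, hs⟩ := pack hα n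
  have h := contsAux_recurrence hs rfl rfl
  refine ⟨b, hb1, ?_, ?_⟩ <;> rw [h] <;> simp [nextConts, nextNum, nextDen]

theorem intAux (hα : Irrational α) (n : ℕ) :
    ∃ (p : ℤ) (q : ℕ), ((GenContFract.of α).contsAux n).a = (p : ℝ) ∧
      ((GenContFract.of α).contsAux n).b = (q : ℝ) := by
  induction n using Nat.twoStepInduction with
  | zero => exact ⟨1, 0, by simp [zeroth_contAux_eq_one_zero], by simp [zeroth_contAux_eq_one_zero]⟩
  | one => exact ⟨⌊α⌋, 1, by simp [first_contAux_eq_h_one, of_h_eq_floor], by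
      simp [first_contAux_eq_h_one]⟩
  | more n ih ih2 =>
    obtain ⟨p, q, hp, hq⟩ := ih
    obtain ⟨p', q', hp', hq'⟩ := ih2
    obtain ⟨b, hb1, ha, hb⟩ := contsAux_rec hα n
    refine ⟨b * p' + p, b.toNat * q' + q, ?_, ?_⟩
    · rw [ha, hp, hp']; push_cast; ring
    · have hbz : ((b.toNat : ℕ) : ℤ) = b := Int.toNat_of_nonneg (by omega)
      have hbt : ((b.toNat : ℕ) : ℝ) = (b : ℝ) := by exact_mod_cast hbz
      rw [hb, hq, hq']
      push_cast [hbt]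
      ring

theorem one_le_contsAux_b (hα : Irrational α) (n : ℕ) :
    1 ≤ ((GenContFract.of α).contsAux (n+1)).b := by
  induction n using Nat.twoStepInduction with
  | zero => simp [first_contAux_eq_h_one]
  | one =>
    obtain ⟨b, hb1, _, hb⟩ := contsAux_rec hα 0
    rw [hb]
    have h0 : ((GenContFract.of α).contsAux 0).b = 0 := by simp [zeroth_contAux_eq_one_zero]
    have h1 : ((GenContFract.of α).contsAux 1).b = 1 := by simp [first_contAux_eq_h_one]
    rw [h0, h1]
    have : (1:ℝ) ≤ (b:ℝ) := by exact_mod_cast hb1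
    linarith
  | more n ih ih2 =>
    obtain ⟨b, hb1, _, hb⟩ := contsAux_rec hα (n+1)
    rw [hb]
    have hbR : (1:ℝ) ≤ (b:ℝ) := by exact_mod_cast hb1
    have h0 : 0 ≤ ((GenContFract.of α).contsAux (n+1)).b := zero_le_of_contsAux_b
    nlinarith [ih2]

theorem one_le_den (hα : Irrational α) (n : ℕ) : 1 ≤ (GenContFract.of α).dens n := by
  rw [den_eq_conts_b, nth_cont_eq_succ_nth_contAux]; exact one_le_contsAux_b hα n

theorem den_int (hα : Irrational α) (n : ℕ) :
    ∃ q : ℕ, (GenContFract.of α).dens n = (q : ℝ) := by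
  obtain ⟨p, q, _, hq⟩ := intAux hα (n+1)
  exact ⟨q, by rw [den_eq_conts_b, nth_cont_eq_succ_nth_contAux, hq]⟩

theorem num_int (hα : Irrational α) (n : ℕ) :
    ∃ p : ℤ, (GenContFract.of α).nums n = (p : ℝ) := by
  obtain ⟨p, q, hp, _⟩ := intAux hα (n+1)
  exact ⟨p, by rw [num_eq_conts_a, nth_cont_eq_succ_nth_contAux, hp]⟩

theorem den_rec (hα : Irrational α) (n : ℕ) : ∃ b : ℝ, 1 ≤ b ∧
    (GenContFract.of α).dens (n+1)
      = b * (GenContFract.of α).dens n + ((GenContFract.of α).contsAux n).b := by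
  obtain ⟨b, hb1, _, hb⟩ := contsAux_rec hα n
  refine ⟨b, by exact_mod_cast hb1, ?_⟩
  rw [den_eq_conts_b, den_eq_conts_b, nth_cont_eq_succ_nth_contAux, nth_cont_eq_succ_nth_contAux,
    hb]

theorem den_two_step (hα : Irrational α) (n : ℕ) :
    (GenContFract.of α).dens (n+1) + (GenContFract.of α).dens n
      ≤ (GenContFract.of α).dens (n+2) := by
  obtain ⟨b, hb1, _, hb⟩ := contsAux_rec hα (n+1)
  have hbb : ((GenContFract.of α).contsAux (n+1)).b = (GenContFract.of α).dens n := by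
    rw [den_eq_conts_b, nth_cont_eq_succ_nth_contAux]
  have h1 : 1 ≤ (GenContFract.of α).dens (n+1) := one_le_den hα (n+1)
  have hd2 : (GenContFract.of α).dens (n+2) = b * (GenContFract.of α).dens (n+1)
      + (GenContFract.of α).dens n := by
    rw [den_eq_conts_b, nth_cont_eq_succ_nth_contAux, hb, hbb,
      den_eq_conts_b (n := n+1), nth_cont_eq_succ_nth_contAux]
  have hbR : (1:ℝ) ≤ (b:ℝ) := by exact_mod_cast hb1
  nlinarith

theorem nat_le_den (hα : Irrational α) (n : ℕ) : (n : ℝ) ≤ (GenContFract.of α).dens n := by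
  induction n using Nat.twoStepInduction with
  | zero => simp
  | one => simpa using one_le_den hα 1
  | more n ih ih2 =>
    have h2 := den_two_step hα n
    have h1 := one_le_den hα n
    push_cast
    push_cast at ih2
    linarith

theorem E_formula (hα : Irrational α) (n : ℕ) : ∃ D : ℝ,
    (GenContFract.of α).dens (n+1) ≤ D ∧
    D < (GenContFract.of α).dens (n+1) + (GenContFract.of α).dens n ∧
    α * (GenContFract.of α).dens n - (GenContFract.of α).nums n = (-1)^n / D := by
  obtain ⟨ifp, b, hst, h0, h1, hb1, hble, hblt, hs⟩ := pack hα n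
  have hsub := sub_convs_eq hst
  simp only [if_neg h0.ne'] at hsub
  set B := ((GenContFract.of α).contsAux (n+1)).b with hB
  set pB := ((GenContFract.of α).contsAux n).b with hpB
  have hBden : (GenContFract.of α).dens n = B := by
    rw [den_eq_conts_b, nth_cont_eq_succ_nth_contAux]
  have hB1 : 1 ≤ B := one_le_contsAux_b hα n
  have hpB0 : 0 ≤ pB := zero_le_of_contsAux_b
  have hrec : (GenContFract.of α).dens (n+1) = b * B + pB := by
    have h := contsAux_recurrence hs rfl rfl
    rw [den_eq_conts_b, nth_cont_eq_succ_nth_contAux, h]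
    simp [nextConts, nextDen, hB, hpB]
  refine ⟨ifp.fr⁻¹ * B + pB, ?_, ?_, ?_⟩
  · rw [hrec]
    have : (b:ℝ) * B ≤ ifp.fr⁻¹ * B := by nlinarith
    linarith
  · rw [hrec, hBden]
    nlinarith
  · have hBne : B ≠ 0 := by linarith
    have hconv : (GenContFract.of α).convs n = (GenContFract.of α).nums n / B := by
      rw [conv_eq_num_div_den, hBden]
    rw [hconv] at hsub
    rw [hBden]
    have hDne : B * (ifp.fr⁻¹ * B + pB) ≠ 0 := by
      have : 0 < ifp.fr⁻¹ := inv_pos.2 h0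
      positivity
    field_simp at hsub ⊢
    nlinarith [hsub]

theorem theta (hα : Irrational α) (n : ℕ) : ∃ t : ℝ, 0 < t ∧
    1 / ((GenContFract.of α).dens (n+1) + (GenContFract.of α).dens n) < t ∧
    t ≤ 1 / (GenContFract.of α).dens (n+1) ∧
    α * (GenContFract.of α).dens n - (GenContFract.of α).nums n = (-1)^n * t := by
  obtain ⟨D, hD1, hD2, hE⟩ := E_formula hα n
  have h1 : 1 ≤ (GenContFract.of α).dens (n+1) := one_le_den hα (n+1)
  have h0 : 1 ≤ (GenContFract.of α).dens n := one_le_den hα n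
  have hD0 : 0 < D := by linarith
  refine ⟨1 / D, by positivity, ?_, ?_, ?_⟩
  · apply one_div_lt_one_div_of_lt hD0 hD2
  · apply one_div_le_one_div_of_le (by linarith) hD1
  · rw [hE]; ring

theorem round_best (x : ℝ) (m : ℤ) : |x - round x| ≤ |x - m| := by
  rw [abs_sub_round_eq_min]
  rcases le_or_gt m ⌊x⌋ with h | h
  · have hm : (m:ℝ) ≤ x := le_trans (by exact_mod_cast h) (Int.floor_le x)
    have : Int.fract x ≤ x - m := by
      have : ((m:ℝ)) ≤ ⌊x⌋ := by exact_mod_cast h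
      rw [Int.fract]; linarith
    calc min (Int.fract x) (1 - Int.fract x) ≤ Int.fract x := min_le_left _ _
      _ ≤ |x - m| := le_trans this (le_abs_self _)
  · have hm : x - m ≤ -(1 - Int.fract x) := by
      have : (⌊x⌋:ℝ) + 1 ≤ m := by exact_mod_cast h
      rw [Int.fract]; linarith
    calc min (Int.fract x) (1 - Int.fract x) ≤ 1 - Int.fract x := min_le_right _ _
      _ ≤ |x - m| := by rw [abs_sub_comm, le_abs]; left; linarith

theorem det_R (hα : Irrational α) (n : ℕ) :
    (GenContFract.of α).nums n * (GenContFract.of α).dens (n+1)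
      - (GenContFract.of α).dens n * (GenContFract.of α).nums (n+1) = (-1)^(n+1) :=
  SimpContFract.determinant (s := SimpContFract.of α) (not_terminatedAt hα n)

theorem abs_le_abs_add_of_mul_nonneg {a b : ℝ} (h : 0 ≤ a * b) : |a| ≤ |a + b| := by
  rcases lt_trichotomy a 0 with ha | ha | ha
  · have hb : b ≤ 0 := by nlinarith
    rw [abs_of_neg ha, abs_of_nonpos (by linarith)]; linarith
  · simp [ha]
  · have hb : 0 ≤ b := by nlinarith
    rw [abs_of_pos ha, abs_of_nonneg (by linarith)]; linarith

/-- The best approximation property of continued fraction convergents. -/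
theorem best_approx (hα : Irrational α) (n : ℕ) (p q : ℤ) (hq0 : 0 < q)
    (hqlt : (q:ℝ) < (GenContFract.of α).dens (n+1)) :
    |α * (GenContFract.of α).dens n - (GenContFract.of α).nums n| ≤ |(q:ℝ) * α - p| := by
  obtain ⟨pn, hpn⟩ := num_int hα n
  obtain ⟨pn', hpn'⟩ := num_int hα (n+1)
  obtain ⟨qn, hqn⟩ := den_int hα n
  obtain ⟨qn', hqn'⟩ := den_int hα (n+1)
  obtain ⟨tn, htn0, _, _, hEn⟩ := theta hα n
  obtain ⟨tn', htn0', _, _, hEn'⟩ := theta hα (n+1)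
  have h1n : (1:ℝ) ≤ qn := by rw [← hqn]; exact one_le_den hα n
  have h1n' : (1:ℝ) ≤ qn' := by rw [← hqn']; exact one_le_den hα (n+1)
  have hqn1 : 1 ≤ (qn:ℤ) := by exact_mod_cast h1n
  have hqn1' : 1 ≤ (qn':ℤ) := by exact_mod_cast h1n'
  -- the determinant over ℤ
  have hdetR : (pn:ℝ) * qn' - qn * pn' = (-1)^(n+1) := by
    rw [← hpn, ← hqn, ← hpn', ← hqn']; exact det_R hα n
  have hdet : (pn:ℤ) * qn' - qn * pn' = (-1)^(n+1) := by exact_mod_cast hdetR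
  have hqZ : q < (qn':ℤ) := by
    have : (q:ℝ) < (qn':ℝ) := by rw [hqn'] at hqlt; exact hqlt
    exact_mod_cast this
  obtain ⟨x, y, hxq, hxp⟩ : ∃ x y : ℤ, x * qn + y * qn' = q ∧ x * pn + y * pn' = p := by
    rcases Nat.even_or_odd (n+1) with he | ho
    · rw [he.neg_one_pow] at hdet
      exact ⟨p * qn' - q * pn', q * pn - p * qn,
        by linear_combination q * hdet, by linear_combination p * hdet⟩
    · rw [ho.neg_one_pow] at hdet
      exact ⟨-(p * qn' - q * pn'), -(q * pn - p * qn),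
        by linear_combination (-q) * hdet, by linear_combination (-p) * hdet⟩
  have hqR : (x:ℝ) * qn + y * qn' = q := by exact_mod_cast hxq
  have hpR : (x:ℝ) * pn + y * pn' = p := by exact_mod_cast hxp
  have hkey : (q:ℝ) * α - p = x * (α * qn - pn) + y * (α * qn' - pn') := by
    rw [← hqR, ← hpR]; ring
  have hEnv : α * (qn:ℝ) - pn = (-1)^n * tn := by rw [← hqn, ← hpn]; exact hEn
  have hEnv' : α * (qn':ℝ) - pn' = (-1)^(n+1) * tn' := by rw [← hqn', ← hpn']; exact hEn'
  have hprod : (α * qn - pn) * (α * qn' - pn') < 0 := by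
    have h2 : ((-1:ℝ))^n * ((-1:ℝ))^n = 1 := by rw [← mul_pow]; norm_num
    have : (α * qn - pn) * (α * qn' - pn') = -(tn * tn') := by
      rw [hEnv, hEnv', pow_succ]
      linear_combination (-(tn * tn')) * h2
    rw [this]
    nlinarith
  rw [hpn, hqn]
  rcases eq_or_ne y 0 with hy0 | hy0
  · subst hy0
    simp only [Int.cast_zero, zero_mul, add_zero] at hxq hkey
    have hx0 : x ≠ 0 := by rintro rfl; omega
    have hx1 : (1:ℝ) ≤ |(x:ℝ)| := by
      have := Int.one_le_abs hx0
      rw [← Int.cast_abs]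
      exact_mod_cast this
    rw [hkey, abs_mul]
    exact le_mul_of_one_le_left (abs_nonneg _) hx1
  rcases eq_or_ne x 0 with hx0 | hx0
  · exfalso
    subst hx0
    simp only [zero_mul, zero_add] at hxq
    have hy1 : 0 < y := by nlinarith
    nlinarith
  · have hx1 : (1:ℝ) ≤ |(x:ℝ)| := by
      have := Int.one_le_abs hx0
      rw [← Int.cast_abs]
      exact_mod_cast this
    have hxy : x * y < 0 := by
      rcases hx0.lt_or_gt with hxneg | hxpos
      · rcases hy0.lt_or_gt with hyneg | hypos
        · exfalso; nlinarith
        · exact mul_neg_of_neg_of_pos hxneg hypos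
      · rcases hy0.lt_or_gt with hyneg | hypos
        · exact mul_neg_of_pos_of_neg hxpos hyneg
        · exfalso; nlinarith
    have hxyR : (x:ℝ) * (y:ℝ) < 0 := by exact_mod_cast hxy
    have hsame : 0 ≤ ((x:ℝ) * (α * qn - pn)) * ((y:ℝ) * (α * qn' - pn')) := by
      have hrw : ((x:ℝ) * (α * qn - pn)) * ((y:ℝ) * (α * qn' - pn'))
          = ((x:ℝ) * (y:ℝ)) * ((α * qn - pn) * (α * qn' - pn')) := by ring
      rw [hrw]
      exact (mul_pos_of_neg_of_neg hxyR hprod).le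
    rw [hkey]
    calc |α * (qn:ℝ) - pn| ≤ |(x:ℝ)| * |α * (qn:ℝ) - pn| :=
          le_mul_of_one_le_left (abs_nonneg _) hx1
      _ = |(x:ℝ) * (α * qn - pn)| := (abs_mul _ _).symm
      _ ≤ |(x:ℝ) * (α * qn - pn) + (y:ℝ) * (α * qn' - pn')| :=
          abs_le_abs_add_of_mul_nonneg hsame

open scoped Classical in
/-- largest k with q_k ≤ 2^ℓ -/
noncomputable def kk (α : ℝ) (ℓ : ℕ) : ℕ :=
  Nat.findGreatest (fun k => (GenContFract.of α).dens k ≤ (2:ℝ)^ℓ) (2^ℓ)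

/-- the Good predicate, matching the one in SingularOnAverage -/
def GoodP (α c : ℝ) (ℓ : ℕ) : Prop :=
  ∃ q : ℕ, 0 < q ∧ q ≤ 2 ^ ℓ ∧ nint (q * α) ≤ c * 2 ^ (-(ℓ : ℤ))

theorem den_mono {α : ℝ} : Monotone fun n => (GenContFract.of α).dens n :=
  monotone_nat_of_le_succ fun _ => of_den_mono

theorem two_zpow (ℓ : ℕ) : (2:ℝ) ^ (-(ℓ:ℤ)) = ((2:ℝ)^ℓ)⁻¹ := by
  rw [zpow_neg, zpow_natCast]

theorem kk_le {α : ℝ} (hα : Irrational α) (ℓ : ℕ) :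
    (GenContFract.of α).dens (kk α ℓ) ≤ (2:ℝ)^ℓ := by
  unfold kk
  exact Nat.findGreatest_spec (P := fun k => (GenContFract.of α).dens k ≤ (2:ℝ)^ℓ)
    (m := 0) (Nat.zero_le _) (by show (GenContFract.of α).dens 0 ≤ (2:ℝ)^ℓ; rw [zeroth_den_eq_one]; exact one_le_pow₀ one_le_two)

theorem le_kk {α : ℝ} (hα : Irrational α) {k ℓ : ℕ}
    (h : (GenContFract.of α).dens k ≤ (2:ℝ)^ℓ) : k ≤ kk α ℓ := by
  unfold kk
  apply Nat.le_findGreatest _ h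
  have h1 : (k:ℝ) ≤ (2:ℝ)^ℓ := (nat_le_den hα k).trans h
  have h2 : (k:ℝ) ≤ ((2^ℓ:ℕ):ℝ) := by push_cast; exact h1
  exact_mod_cast h2

theorem kk_succ {α : ℝ} (hα : Irrational α) (ℓ : ℕ) :
    (2:ℝ)^ℓ < (GenContFract.of α).dens (kk α ℓ + 1) := by
  by_contra h
  push_neg at h
  have := le_kk hα h
  omega

theorem kk_mono {α : ℝ} (hα : Irrational α) {ℓ ℓ' : ℕ} (h : ℓ ≤ ℓ') : kk α ℓ ≤ kk α ℓ' :=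
  le_kk hα ((kk_le hα ℓ).trans (pow_le_pow_right₀ one_le_two h))

theorem lt_of_den_gt {α : ℝ} (hα : Irrational α) {m ℓ : ℕ}
    (h : (2:ℝ)^ℓ < (GenContFract.of α).dens m) : kk α ℓ < m := by
  by_contra hc
  push_neg at hc
  exact absurd ((den_mono hc).trans (kk_le hα ℓ)) (not_le.2 h)

theorem abs_theta {α : ℝ} (hα : Irrational α) (n : ℕ) :
    1 / ((GenContFract.of α).dens (n+1) + (GenContFract.of α).dens n)
      < |α * (GenContFract.of α).dens n - (GenContFract.of α).nums n| ∧
    |α * (GenContFract.of α).dens n - (GenContFract.of α).nums n|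
      ≤ 1 / (GenContFract.of α).dens (n+1) := by
  obtain ⟨t, ht0, hlow, hup, hE⟩ := theta hα n
  have habs : |α * (GenContFract.of α).dens n - (GenContFract.of α).nums n| = t := by
    rw [hE, abs_mul, abs_pow, abs_neg, abs_one, one_pow, one_mul, abs_of_pos ht0]
  rw [habs]
  exact ⟨hlow, hup⟩

theorem good_iff {α : ℝ} (hα : Irrational α) {c : ℝ} (hc : 0 < c) (ℓ : ℕ) :
    GoodP α c ℓ ↔
      |α * (GenContFract.of α).dens (kk α ℓ) - (GenContFract.of α).nums (kk α ℓ)|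
        ≤ c * ((2:ℝ)^ℓ)⁻¹ := by
  constructor
  · rintro ⟨q, hq0, hqle, hq⟩
    rw [two_zpow] at hq
    refine le_trans ?_ hq
    have hql : (q:ℝ) < (GenContFract.of α).dens (kk α ℓ + 1) := by
      refine lt_of_le_of_lt ?_ (kk_succ hα ℓ)
      have : ((2^ℓ:ℕ):ℝ) = (2:ℝ)^ℓ := by push_cast; ring
      rw [← this]
      exact_mod_cast hqle
    have := best_approx hα (kk α ℓ) (round ((q:ℝ) * α)) (q:ℤ) (by exact_mod_cast hq0)
      (by exact_mod_cast hql)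
    refine this.trans ?_
    unfold nint
    push_cast
    exact le_refl _
  · intro h
    obtain ⟨qn, hqn⟩ := den_int hα (kk α ℓ)
    obtain ⟨pn, hpn⟩ := num_int hα (kk α ℓ)
    refine ⟨qn, ?_, ?_, ?_⟩
    · have : (1:ℝ) ≤ qn := hqn ▸ one_le_den hα (kk α ℓ)
      exact_mod_cast this
    · have h1 : (qn:ℝ) ≤ (2:ℝ)^ℓ := hqn ▸ kk_le hα ℓ
      have : ((2^ℓ:ℕ):ℝ) = (2:ℝ)^ℓ := by push_cast; ring
      rw [← this] at h1
      exact_mod_cast h1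
    · rw [two_zpow]
      refine le_trans ?_ h
      have h2 := round_best ((qn:ℝ) * α) pn
      unfold nint
      refine h2.trans ?_
      rw [hqn, hpn]
      have : (qn:ℝ) * α - pn = α * qn - pn := by ring
      rw [this]

theorem den_rpow {α : ℝ} (hα : Irrational α) {k : ℕ} (hk : k ≠ 0) :
    ((GenContFract.of α).dens k ^ ((k:ℝ)⁻¹)) ^ (k:ℕ) = (GenContFract.of α).dens k := by
  have hd : (0:ℝ) < (GenContFract.of α).dens k := lt_of_lt_of_le zero_lt_one (one_le_den hα k)
  have hkR : ((k:ℝ)) ≠ 0 := Nat.cast_ne_zero.2 hk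
  rw [← Real.rpow_natCast ((GenContFract.of α).dens k ^ ((k:ℝ)⁻¹)) k,
    ← Real.rpow_mul hd.le, inv_mul_cancel₀ hkR, Real.rpow_one]

theorem kk_div_tendsto {α : ℝ} (hα : Irrational α)
    (hT : Tendsto (fun k : ℕ => (GenContFract.of α).dens k ^ ((k:ℝ)⁻¹)) atTop atTop) :
    Tendsto (fun N : ℕ => (kk α N : ℝ) / N) atTop (nhds 0) := by
  rw [Metric.tendsto_atTop]
  intro ε hε
  obtain ⟨M, hM⟩ := exists_nat_gt (2/ε)
  have hM0 : 0 < M := by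
    have : (0:ℝ) < M := lt_trans (by positivity) hM
    exact_mod_cast this
  obtain ⟨k₀, hk₀⟩ := eventually_atTop.1 (hT.eventually_ge_atTop ((2:ℝ)^(M:ℕ)))
  set k₁ := max k₀ 1 with hk₁def
  have key : ∀ k, k₁ ≤ k → (2:ℝ)^(M*k) ≤ (GenContFract.of α).dens k := by
    intro k hk
    have h1 := hk₀ k (le_trans (le_max_left _ _) hk)
    have hkne : k ≠ 0 := by omega
    calc (2:ℝ)^(M*k) = ((2:ℝ)^M)^k := by rw [pow_mul]
      _ ≤ ((GenContFract.of α).dens k ^ ((k:ℝ)⁻¹))^k := by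
          apply pow_le_pow_left₀ (by positivity) h1
      _ = (GenContFract.of α).dens k := den_rpow hα hkne
  obtain ⟨N₁, hN₁⟩ := exists_nat_gt ((k₁:ℝ)*2/ε)
  refine ⟨max N₁ 1, fun N hN => ?_⟩
  have hN1 : 1 ≤ N := le_trans (le_max_right _ _) hN
  have hNpos : (0:ℝ) < N := by exact_mod_cast hN1
  rw [Real.dist_eq, sub_zero, abs_of_nonneg (by positivity)]
  rcases lt_or_ge (kk α N) k₁ with hsm | hlg
  · have h1 : (kk α N : ℝ) < k₁ := by exact_mod_cast hsm
    have h2 : (N₁:ℝ) ≤ N := by exact_mod_cast le_trans (le_max_left _ _) hN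
    have hk₁pos : (0:ℝ) < k₁ := by
      have : 1 ≤ k₁ := le_max_right _ _
      exact_mod_cast lt_of_lt_of_le zero_lt_one (by exact_mod_cast this)
    have h3 : (k₁:ℝ) < ε * N := by
      have : (k₁:ℝ)*2/ε < N := lt_of_lt_of_le hN₁ h2
      rw [div_lt_iff₀ hε] at this
      nlinarith
    rw [div_lt_iff₀ hNpos]
    linarith
  · have h2 := key _ hlg
    have h4 : (2:ℝ)^(M * kk α N) ≤ 2^N := h2.trans (kk_le hα N)
    have h5 : M * kk α N ≤ N := by
      exact_mod_cast (pow_le_pow_iff_right₀ (by norm_num : (1:ℝ) < 2)).1 h4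
    have hMR : (0:ℝ) < M := by exact_mod_cast hM0
    have hkk : (kk α N:ℝ) * M ≤ N := by
      have : ((M * kk α N : ℕ):ℝ) ≤ N := by exact_mod_cast h5
      push_cast at this
      linarith
    rw [div_lt_iff₀ hNpos]
    have hεM : (2:ℝ) < ε * M := by
      have := (div_lt_iff₀ hε).1 hM
      nlinarith
    nlinarith

theorem bad_card {α : ℝ} (hα : Irrational α) {c : ℝ} (hc : 0 < c) {C₀ : ℕ}
    (hC : c⁻¹ ≤ (2:ℝ)^C₀) (N : ℕ) :
    ((Finset.Icc 1 N).filter (fun ℓ => ¬ GoodP α c ℓ)).card ≤ (kk α N + 1) * (C₀ + 1) := by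
  classical
  have main : ∀ l l', l ≤ N → l' ≤ N → ¬GoodP α c l → ¬GoodP α c l' → l ≤ l' →
      kk α l = kk α l' → l' < l + (C₀+1) := by
    intro l l' hlN hl'N hbl hbl' hle hkk
    set k := kk α l with hk
    have h1 : c * ((2:ℝ)^l)⁻¹ < |α * (GenContFract.of α).dens k - (GenContFract.of α).nums k| :=
      lt_of_not_ge (fun hh => hbl ((good_iff hα hc l).2 hh))
    have h2 := (abs_theta hα k).2
    have h3 : (2:ℝ)^l' < (GenContFract.of α).dens (k+1) := by
      rw [hkk]; exact kk_succ hα l'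
    have hd1 : (1:ℝ) ≤ (GenContFract.of α).dens (k+1) := one_le_den hα (k+1)
    have hp : (0:ℝ) < 2^l := pow_pos two_pos l
    have hp' : (0:ℝ) < 2^l' := pow_pos two_pos l'
    -- c/2^l < 1/dens(k+1) < 1/2^l'
    have h4 : c * ((2:ℝ)^l)⁻¹ < ((2:ℝ)^l')⁻¹ := by
      have h5 : 1 / (GenContFract.of α).dens (k+1) < ((2:ℝ)^l')⁻¹ := by
        rw [one_div]
        exact inv_strictAnti₀ hp' h3
      linarith [h1.trans_le h2]
    -- hence 2^l' < 2^(l+C₀)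
    have h6 : (2:ℝ)^l' < 2^(l+C₀) := by
      rw [pow_add]
      have h7 : c * 2^l' < 2^l := by
        have h9 := mul_lt_mul_of_pos_right h4 (mul_pos hp hp')
        calc c * 2^l' = (c * ((2:ℝ)^l)⁻¹) * (2^l * 2^l') := by field_simp
          _ < ((2:ℝ)^l')⁻¹ * (2^l * 2^l') := h9
          _ = 2^l := by field_simp
      calc (2:ℝ)^l' = (c*2^l')*c⁻¹ := by field_simp
        _ < 2^l * c⁻¹ := mul_lt_mul_of_pos_right h7 (inv_pos.2 hc)
        _ ≤ 2^l * 2^C₀ := mul_le_mul_of_nonneg_left hC hp.le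
    have h8 : l' < l + C₀ := by
      exact_mod_cast (pow_lt_pow_iff_right₀ (by norm_num : (1:ℝ) < 2)).1 h6
    omega
  rw [show (kk α N + 1) * (C₀ + 1)
      = ((Finset.range (kk α N + 1)) ×ˢ (Finset.range (C₀+1))).card by
    rw [Finset.card_product, Finset.card_range, Finset.card_range]]
  apply Finset.card_le_card_of_injOn (fun ℓ => (kk α ℓ, ℓ % (C₀+1)))
  · intro ℓ hℓ
    rw [Finset.mem_coe, Finset.mem_filter, Finset.mem_Icc] at hℓ
    rw [Finset.mem_coe, Finset.mem_product, Finset.mem_range, Finset.mem_range]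
    exact ⟨Nat.lt_succ_of_le (kk_mono hα hℓ.1.2), Nat.mod_lt _ (Nat.succ_pos _)⟩
  · intro l hl l' hl' heq
    rw [Finset.coe_filter, Set.mem_setOf_eq, Finset.mem_Icc] at hl hl'
    rw [Prod.mk.injEq] at heq
    have hmod : l % (C₀+1) = l' % (C₀+1) := heq.2
    rcases le_total l l' with h | h
    · have := main l l' hl.1.2 hl'.1.2 hl.2 hl'.2 h heq.1
      have hdvd : (C₀+1) ∣ l' - l := (Nat.modEq_iff_dvd' h).1 hmod
      have := Nat.eq_zero_of_dvd_of_lt hdvd (by omega)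
      omega
    · have := main l' l hl'.1.2 hl.1.2 hl'.2 hl.2 h heq.1.symm
      have hdvd : (C₀+1) ∣ l - l' := (Nat.modEq_iff_dvd' h).1 hmod.symm
      have := Nat.eq_zero_of_dvd_of_lt hdvd (by omega)
      omega

theorem dir2 {α : ℝ} (hα : Irrational α)
    (hT : Tendsto (fun k : ℕ => (GenContFract.of α).dens k ^ ((k:ℝ)⁻¹)) atTop atTop) :
    SingularOnAverage α := by
  intro c hc
  obtain ⟨C₀, hC₀⟩ := pow_unbounded_of_one_lt (c⁻¹) (one_lt_two)
  have hfil : ∀ N : ℕ, (Finset.Icc 1 N).filter (fun ℓ : ℕ =>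
      ∃ q : ℕ, 0 < q ∧ q ≤ 2 ^ ℓ ∧ nint (q * α) ≤ c * 2 ^ (-(ℓ : ℤ)))
      = (Finset.Icc 1 N).filter (GoodP α c) := by
    intro N
    apply Finset.filter_congr
    intro x _
    exact Iff.rfl
  have hcard : ∀ N : ℕ, ((Finset.Icc 1 N).filter (GoodP α c)).card
      + ((Finset.Icc 1 N).filter (fun ℓ => ¬GoodP α c ℓ)).card = N := by
    intro N
    rw [Finset.card_filter_add_card_filter_not, Nat.card_Icc]
    omega
  have hg : Tendsto (fun N : ℕ => 1 - ((C₀:ℝ)+1) * ((kk α N:ℝ)/N) - ((C₀:ℝ)+1) * (1/(N:ℝ)))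
      atTop (nhds 1) := by
    have h := ((tendsto_const_nhds (x := (1:ℝ)) (f := atTop)).sub
        ((tendsto_const_nhds (x := ((C₀:ℝ)+1))).mul (kk_div_tendsto hα hT))).sub
        ((tendsto_const_nhds (x := ((C₀:ℝ)+1))).mul tendsto_one_div_atTop_nhds_zero_nat)
    simpa using h
  refine tendsto_of_tendsto_of_tendsto_of_le_of_le' hg tendsto_const_nhds ?_ ?_
  · -- lower bound, eventually
    filter_upwards [eventually_ge_atTop 1] with N hN1
    have hN0 : (0:ℝ) < N := by exact_mod_cast hN1
    have hb := bad_card hα hc hC₀.le N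
    have hbR : (((Finset.Icc 1 N).filter (fun ℓ => ¬GoodP α c ℓ)).card : ℝ)
        ≤ ((kk α N : ℝ) + 1) * ((C₀:ℝ) + 1) := by exact_mod_cast hb
    have hgood : ((((Finset.Icc 1 N).filter (GoodP α c)).card : ℝ))
        = N - (((Finset.Icc 1 N).filter (fun ℓ => ¬GoodP α c ℓ)).card : ℝ) := by
      have := hcard N
      have h2 : ((((Finset.Icc 1 N).filter (GoodP α c)).card : ℝ))
          + (((Finset.Icc 1 N).filter (fun ℓ => ¬GoodP α c ℓ)).card : ℝ) = N := by
        exact_mod_cast this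
      linarith
    rw [hfil N, hgood]
    have hgN : 1 - ((C₀:ℝ)+1) * ((kk α N:ℝ)/N) - ((C₀:ℝ)+1) * (1/(N:ℝ))
        = ((N:ℝ) - ((kk α N:ℝ)+1)*((C₀:ℝ)+1))/N := by
      field_simp
      ring
    rw [hgN]
    exact (div_le_div_iff_of_pos_right hN0).2 (by linarith)
  · -- upper bound
    filter_upwards [eventually_ge_atTop 1] with N hN1
    have hN0 : (0:ℝ) < N := by exact_mod_cast hN1
    rw [div_le_one hN0]
    have := Finset.card_filter_le (Finset.Icc 1 N) (fun ℓ : ℕ =>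
      ∃ q : ℕ, 0 < q ∧ q ≤ 2 ^ ℓ ∧ nint (q * α) ≤ c * 2 ^ (-(ℓ : ℤ)))
    have h2 : ((Finset.Icc 1 N).card : ℝ) = N := by rw [Nat.card_Icc]; push_cast; ring
    calc ((((Finset.Icc 1 N).filter _).card : ℝ)) ≤ ((Finset.Icc 1 N).card : ℝ) := by
          exact_mod_cast this
      _ = N := h2

set_option maxHeartbeats 800000 in
theorem dir1 {α : ℝ} (hα : Irrational α) (hS : SingularOnAverage α) :
    Tendsto (fun k : ℕ => (GenContFract.of α).dens k ^ ((k:ℝ)⁻¹)) atTop atTop := by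
  by_contra hT
  rw [tendsto_atTop] at hT
  push_neg at hT
  obtain ⟨b, hb⟩ := hT
  set M := max b 2 with hMdef
  have hM2 : (2:ℝ) ≤ M := le_max_right _ _
  obtain ⟨L, hL⟩ := pow_unbounded_of_one_lt M one_lt_two
  set ε : ℝ := 1/(8*((L:ℝ)+1)) with hεdef
  have hε : 0 < ε := by positivity
  have hev := (hS (1/8) (by norm_num)).eventually (eventually_gt_nhds (by linarith : 1 - ε < 1))
  obtain ⟨N₀, hN₀⟩ := eventually_atTop.1 hev
  obtain ⟨K, hfK, hKge⟩ := (hb.and_eventually (eventually_ge_atTop (max 8 (2^N₀)))).exists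
  have hK8 : 8 ≤ K := le_trans (le_max_left _ _) hKge
  have hKN₀ : 2^N₀ ≤ K := le_trans (le_max_right _ _) hKge
  have hK0 : K ≠ 0 := by omega
  have hden_pos : ∀ m : ℕ, (0:ℝ) < (GenContFract.of α).dens m :=
    fun m => lt_of_lt_of_le zero_lt_one (one_le_den hα m)
  have hdK : (GenContFract.of α).dens K < M^K := by
    have h1 : (GenContFract.of α).dens K ^ ((K:ℝ)⁻¹) < M := lt_of_lt_of_le hfK (le_max_left _ _)
    calc (GenContFract.of α).dens K = ((GenContFract.of α).dens K ^ ((K:ℝ)⁻¹))^K :=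
          (den_rpow hα hK0).symm
      _ < M^K := pow_lt_pow_left₀ h1 (Real.rpow_nonneg (hden_pos K).le _) hK0
  have hLK : (GenContFract.of α).dens K ≤ (2:ℝ)^(L*K) := by
    calc (GenContFract.of α).dens K ≤ M^K := hdK.le
      _ ≤ ((2:ℝ)^L)^K := pow_le_pow_left₀ (by linarith) hL.le K
      _ = 2^(L*K) := by rw [← pow_mul]
  have hPex : ∃ n : ℕ, (GenContFract.of α).dens K ≤ (2:ℝ)^n := ⟨L*K, hLK⟩
  set N := Nat.find hPex with hNdef
  have hN : (GenContFract.of α).dens K ≤ (2:ℝ)^N := Nat.find_spec hPex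
  have hNle : N ≤ L*K := Nat.find_min' hPex hLK
  have hKR : (K:ℝ) ≤ (2:ℝ)^N := (nat_le_den hα K).trans hN
  have hN₀N : N₀ ≤ N := by
    by_contra h
    push_neg at h
    have h1 : (2:ℝ)^N < (2:ℝ)^N₀ := pow_lt_pow_right₀ one_lt_two h
    have h2 : ((2:ℝ))^N₀ ≤ (K:ℝ) := by
      have : ((2^N₀:ℕ):ℝ) ≤ (K:ℝ) := by exact_mod_cast hKN₀
      calc ((2:ℝ))^N₀ = ((2^N₀:ℕ):ℝ) := by push_cast; ring
        _ ≤ (K:ℝ) := this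
    linarith
  -- the family of bad exponents
  set J := K/2 - 1 with hJdef
  have hjK : ∀ j, j ≤ J → 2*j+2 ≤ K := by omega
  have hPj : ∀ j, 2*j+2 ≤ K → ∃ n : ℕ, (GenContFract.of α).dens (2*j+2) ≤ (2:ℝ)^n :=
    fun j hj => ⟨N, (den_mono (by omega : 2*j+2 ≤ K)).trans hN⟩
  set F : ℕ → ℕ := fun j => if h : 2*j+2 ≤ K then Nat.find (hPj j h) - 1 else 0 with hFdef
  have hFfacts : ∀ j, 1 ≤ j → 2*j+2 ≤ K →
      1 ≤ F j ∧ (2:ℝ)^(F j) < (GenContFract.of α).dens (2*j+2) ∧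
      (GenContFract.of α).dens (2*j+2) ≤ (2:ℝ)^(F j + 1) := by
    intro j hj1 hjK'
    have hfind := Nat.find_spec (hPj j hjK')
    have hd4 : (4:ℝ) ≤ (GenContFract.of α).dens (2*j+2) := by
      have hjR : (1:ℝ) ≤ (j:ℝ) := by exact_mod_cast hj1
      calc (4:ℝ) ≤ 2*(j:ℝ)+2 := by linarith
        _ = ((2*j+2 : ℕ):ℝ) := by push_cast; ring
        _ ≤ _ := nat_le_den hα (2*j+2)
    have h2lt : 1 < Nat.find (hPj j hjK') := by
      rw [Nat.lt_find_iff]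
      intro m hm
      interval_cases m <;> simp <;> nlinarith
    have hFj : F j = Nat.find (hPj j hjK') - 1 := by rw [hFdef]; simp [hjK']
    have hFj1 : F j + 1 = Nat.find (hPj j hjK') := by omega
    refine ⟨by omega, ?_, by rw [hFj1]; exact hfind⟩
    have := Nat.find_min (hPj j hjK') (m := F j) (by omega)
    push_neg at this
    exact this
  -- badness of the F j
  have hbad : ∀ j, 1 ≤ j → j ≤ J → ¬GoodP α (1/8) (F j) := by
    intro j hj1 hjJ hgood
    obtain ⟨hF1, hFlt, hFle⟩ := hFfacts j hj1 (hjK j hjJ)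
    set k := kk α (F j) with hkdef
    have h1 := (good_iff hα (by norm_num) (F j)).1 hgood
    have h2 := (abs_theta hα k).1
    have hmono : (GenContFract.of α).dens k ≤ (GenContFract.of α).dens (k+1) :=
      den_mono (Nat.le_succ k)
    have hklt : k < 2*j+2 := lt_of_den_gt hα hFlt
    have hle2 : (GenContFract.of α).dens (k+1) ≤ (GenContFract.of α).dens (2*j+2) :=
      den_mono (by omega)
    have hle3 : (GenContFract.of α).dens (k+1) ≤ 2*2^(F j) :=
      hle2.trans (hFle.trans (le_of_eq (by rw [pow_succ]; ring)))
    have hpos : (0:ℝ) < 2^(F j) := pow_pos two_pos _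
    have hsum : (GenContFract.of α).dens (k+1) + (GenContFract.of α).dens k ≤ 4*2^(F j) := by
      linarith
    have hdsum : (0:ℝ) < (GenContFract.of α).dens (k+1) + (GenContFract.of α).dens k := by
      linarith [hden_pos (k+1), hden_pos k]
    have h4 : 1/(4*(2:ℝ)^(F j))
        ≤ 1/((GenContFract.of α).dens (k+1) + (GenContFract.of α).dens k) :=
      one_div_le_one_div_of_le hdsum hsum
    have h5 : (1:ℝ)/(4*2^(F j)) < (1/8)*((2:ℝ)^(F j))⁻¹ := lt_of_le_of_lt h4 (h2.trans_le h1)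
    have he : (1:ℝ)/(4*2^(F j)) = (1/4)*((2:ℝ)^(F j))⁻¹ := by rw [one_div, mul_inv]; ring
    rw [he] at h5
    have hip : (0:ℝ) < ((2:ℝ)^(F j))⁻¹ := inv_pos.2 hpos
    linarith
  -- F j ≤ N
  have hFN : ∀ j, 1 ≤ j → j ≤ J → F j < N := by
    intro j hj1 hjJ
    obtain ⟨hF1, hFlt, hFle⟩ := hFfacts j hj1 (hjK j hjJ)
    have h1 : (2:ℝ)^(F j) < 2^N :=
      hFlt.trans_le ((den_mono (by omega : 2*j+2 ≤ K)).trans hN)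
    exact_mod_cast (pow_lt_pow_iff_right₀ (by norm_num : (1:ℝ) < 2)).1 h1
  -- strict monotonicity
  have hFmono : ∀ j j', 1 ≤ j → j < j' → j' ≤ J → F j < F j' := by
    intro j j' hj1 hjj' hj'J
    obtain ⟨hF1, hFlt, hFle⟩ := hFfacts j hj1 (by have := hjK j' hj'J; omega)
    obtain ⟨hF1', hFlt', hFle'⟩ := hFfacts j' (by omega) (hjK j' hj'J)
    have hstep := den_two_step hα (2*j+2)
    have hm1 : (GenContFract.of α).dens (2*j+2) ≤ (GenContFract.of α).dens (2*j+2+1) :=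
      den_mono (Nat.le_succ _)
    have hm2 : (GenContFract.of α).dens (2*j+2+2) ≤ (GenContFract.of α).dens (2*j'+2) :=
      den_mono (by omega)
    have hdbl : 2*(GenContFract.of α).dens (2*j+2) ≤ (GenContFract.of α).dens (2*j'+2) := by
      linarith
    have hkey : (2:ℝ)^(F j + 1) < 2^(F j' + 1) := by
      calc (2:ℝ)^(F j + 1) = 2*2^(F j) := by rw [pow_succ]; ring
        _ < 2*(GenContFract.of α).dens (2*j+2) := by linarith
        _ ≤ (GenContFract.of α).dens (2*j'+2) := hdbl
        _ ≤ 2^(F j' + 1) := hFle'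
    have := (pow_lt_pow_iff_right₀ (by norm_num : (1:ℝ) < 2)).1 hkey
    omega
  -- cardinality of the bad set
  have hfil : (Finset.Icc 1 N).filter (fun ℓ : ℕ =>
      ∃ q : ℕ, 0 < q ∧ q ≤ 2 ^ ℓ ∧ nint (q * α) ≤ (1/8) * 2 ^ (-(ℓ : ℤ)))
      = (Finset.Icc 1 N).filter (GoodP α (1/8)) := by
    apply Finset.filter_congr
    intro x _
    exact Iff.rfl
  have hcard : ((Finset.Icc 1 N).filter (GoodP α (1/8))).card
      + ((Finset.Icc 1 N).filter (fun ℓ => ¬GoodP α (1/8) ℓ)).card = N := by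
    rw [Finset.card_filter_add_card_filter_not, Nat.card_Icc]
    omega
  have hbadcard : J ≤ ((Finset.Icc 1 N).filter (fun ℓ => ¬GoodP α (1/8) ℓ)).card := by
    have h1 : J = (Finset.Icc 1 J).card := by rw [Nat.card_Icc]; omega
    rw [h1]
    apply Finset.card_le_card_of_injOn F
    · intro j hj
      rw [Finset.mem_coe, Finset.mem_Icc] at hj
      rw [Finset.mem_coe, Finset.mem_filter, Finset.mem_Icc]
      obtain ⟨hF1, _, _⟩ := hFfacts j hj.1 (hjK j hj.2)
      exact ⟨⟨hF1, (hFN j hj.1 hj.2).le⟩, hbad j hj.1 hj.2⟩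
    · intro j hj j' hj' heq
      simp only [Finset.coe_Icc, Set.mem_Icc] at hj hj'
      rcases lt_trichotomy j j' with h | h | h
      · exact absurd heq (hFmono j j' hj.1 h hj'.2).ne
      · exact h
      · exact absurd heq.symm (hFmono j' j hj'.1 h hj.2).ne
  -- the contradiction
  have hgN := hN₀ N hN₀N
  rw [hfil] at hgN
  have hNpos : 0 < N := by
    by_contra h
    push_neg at h
    interval_cases N
    · simp at hKR
      have : (8:ℝ) ≤ (K:ℝ) := by exact_mod_cast hK8
      linarith
  have hNR : (0:ℝ) < N := by exact_mod_cast hNpos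
  have hgoodle : (((Finset.Icc 1 N).filter (GoodP α (1/8))).card : ℝ) ≤ (N:ℝ) - J := by
    have h2 : (((Finset.Icc 1 N).filter (GoodP α (1/8))).card : ℝ)
        + (((Finset.Icc 1 N).filter (fun ℓ => ¬GoodP α (1/8) ℓ)).card : ℝ) = N := by
      exact_mod_cast hcard
    have h3 : (J:ℝ) ≤ (((Finset.Icc 1 N).filter (fun ℓ => ¬GoodP α (1/8) ℓ)).card : ℝ) := by
      exact_mod_cast hbadcard
    linarith
  have hJlt : (J:ℝ) < ε * N := by
    have h1 : 1 - ε < ((N:ℝ) - J)/N := lt_of_lt_of_le hgN ((div_le_div_iff_of_pos_right hNR).2 hgoodle)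
    rw [lt_div_iff₀ hNR] at h1
    nlinarith
  have hεN : ε * (N:ℝ) ≤ (K:ℝ)/8 := by
    have hNRle : (N:ℝ) ≤ (L:ℝ)*K := by exact_mod_cast hNle
    have hεe : ε * (8*((L:ℝ)+1)) = 1 := by rw [hεdef]; field_simp
    have hKpos : (0:ℝ) < K := by exact_mod_cast Nat.pos_of_ne_zero hK0
    have h1 : ε * (N:ℝ) ≤ ε * ((L:ℝ)*K) := mul_le_mul_of_nonneg_left hNRle hε.le
    have hLnn : (0:ℝ) ≤ (L:ℝ) := Nat.cast_nonneg L
    have h2 : ε * ((L:ℝ)*K) ≤ (K:ℝ)/8 := by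
      rw [le_div_iff₀ (by norm_num : (0:ℝ) < 8)]
      nlinarith [hKpos.le, hε.le, hεe]
    linarith
  have h4J : K ≤ 4*J := by omega
  have h4JR : (K:ℝ) ≤ 4*(J:ℝ) := by exact_mod_cast h4J
  have hKpos : (0:ℝ) < K := by exact_mod_cast Nat.pos_of_ne_zero hK0
  nlinarith


end CFAux

theorem stmt7 (α : ℝ) (hα : Irrational α) :
    SingularOnAverage α ↔
      Tendsto (fun k : ℕ => cfDen α k ^ ((k : ℝ)⁻¹)) atTop atTop := by
  constructor
  · intro hS
    have h := CFAux.dir1 hα hS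
    simpa only [cfDen] using h
  · intro hT
    apply CFAux.dir2 hα
    simpa only [cfDen] using hT
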